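/- Under the hypotheses of the trace bound (unit-diagonal PSD kernel matrix, every point within kernel-distance ρ of some inducing point, K_Z positive definite with unit diagonal and off-diagonal entries bounded by ρ), the Frobenius norm satisfies ||K_X - K_{XZ}K_Z^{-1}K_{ZX}||_F ≤ (N-M)(1 - ρ²/(1 + M(M-1)ρ)), provided λ_max(K_Z) ≥ 1. -/

import Mathlib

open Matrix

private lemma psd_cs {n : ℕ} {A : Matrix (Fin n) (Fin n) ℝ} (hA : A.PosSemidef)
    (w v : Fin n → ℝ) : (w ⬝ᵥ A *ᵥ v) ^ 2 ≤ (w ⬝ᵥ A *ᵥ w) * (v ⬝ᵥ A *ᵥ v) := by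
  have hsymm : ∀ a b : Fin n → ℝ, a ⬝ᵥ A *ᵥ b = b ⬝ᵥ A *ᵥ a := by
    intro a b
    have hAt : Aᵀ = A := by
      have := hA.1
      rwa [Matrix.IsHermitian, conjTranspose_eq_transpose_of_trivial] at this
    rw [dotProduct_mulVec, ← mulVec_transpose, hAt, dotProduct_comm]
  have hq : ∀ t : ℝ, 0 ≤ (v ⬝ᵥ A *ᵥ v) * (t * t) + (2 * (w ⬝ᵥ A *ᵥ v)) * t
      + (w ⬝ᵥ A *ᵥ w) := by
    intro t
    have h0 := hA.dotProduct_mulVec_nonneg (w + t • v)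
    simp only [star_trivial, mulVec_add, mulVec_smul, dotProduct_add, add_dotProduct,
      smul_dotProduct, dotProduct_smul, smul_eq_mul] at h0
    rw [hsymm v w] at h0
    nlinarith [h0]
  have hd := discrim_le_zero hq
  rw [discrim] at hd
  nlinarith [hd]

private lemma quad_bound {n : ℕ} (A : Matrix (Fin n) (Fin n) ℝ) (ρ : ℝ) (hρ : 0 ≤ ρ)
    (hdiag : ∀ i, A i i = 1) (hoff : ∀ i j, i ≠ j → |A i j| ≤ ρ) (x : Fin n → ℝ) :
    x ⬝ᵥ A *ᵥ x ≤ (1 + n * (n - 1) * ρ) * (x ⬝ᵥ x) := by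
  have hxx : x ⬝ᵥ x = ∑ i, x i ^ 2 := by
    simp [dotProduct, sq]
  set s : ℝ := ∑ i, x i ^ 2 with hs
  set t : ℝ := ∑ i, |x i| with ht
  have hs0 : 0 ≤ s := Finset.sum_nonneg fun i _ => sq_nonneg _
  have expand : x ⬝ᵥ A *ᵥ x = ∑ i, ∑ j, x i * A i j * x j := by
    simp [dotProduct, mulVec, Finset.mul_sum, mul_assoc]
  have step : x ⬝ᵥ A *ᵥ x ≤ s + ρ * (t * t - s) := by
    rw [expand]
    have hrow : ∀ i : Fin n, ∑ j, x i * A i j * x j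
        ≤ x i ^ 2 + ρ * (|x i| * (t - |x i|)) := by
      intro i
      rw [← Finset.sum_erase_add _ _ (Finset.mem_univ i), hdiag i]
      have h1 : ∑ j ∈ Finset.univ.erase i, x i * A i j * x j
          ≤ ∑ j ∈ Finset.univ.erase i, ρ * (|x i| * |x j|) := by
        refine Finset.sum_le_sum fun j hj => ?_
        have hji : i ≠ j := fun h => (Finset.mem_erase.mp hj).1 h.symm
        calc x i * A i j * x j ≤ |x i * A i j * x j| := le_abs_self _
          _ = |x i| * |A i j| * |x j| := by rw [abs_mul, abs_mul]
          _ ≤ |x i| * ρ * |x j| :=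
              mul_le_mul_of_nonneg_right
                (mul_le_mul_of_nonneg_left (hoff i j hji) (abs_nonneg _)) (abs_nonneg _)
          _ = ρ * (|x i| * |x j|) := by ring
      have h2 : ∑ j ∈ Finset.univ.erase i, ρ * (|x i| * |x j|)
          = ρ * (|x i| * (t - |x i|)) := by
        rw [← Finset.mul_sum, ← Finset.mul_sum, Finset.sum_erase_eq_sub (Finset.mem_univ i)]
      have : x i * 1 * x i = x i ^ 2 := by ring
      rw [this]
      linarith [h1, h2.le, h2.ge]
    calc ∑ i, ∑ j, x i * A i j * x j ≤ ∑ i, (x i ^ 2 + ρ * (|x i| * (t - |x i|))) :=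
          Finset.sum_le_sum fun i _ => hrow i
      _ = s + ρ * (t * t - s) := by
          rw [Finset.sum_add_distrib]
          congr 1
          rw [← Finset.mul_sum]
          congr 1
          have heq : ∀ i : Fin n, |x i| * (t - |x i|) = t * |x i| - x i ^ 2 := by
            intro i
            rw [← sq_abs (x i)]
            ring
          rw [Finset.sum_congr rfl fun i _ => heq i, Finset.sum_sub_distrib, ← Finset.mul_sum]
  have htns : t * t ≤ n * s := by
    have h := sq_sum_le_card_mul_sum_sq (s := Finset.univ) (f := fun i : Fin n => |x i|)
    simp only [Finset.card_univ, Fintype.card_fin, sq_abs] at h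
    calc t * t = t ^ 2 := by ring
      _ ≤ n * s := h
  rw [hxx]
  nlinarith [mul_nonneg hρ hs0, sq_nonneg ((n : ℝ) - 1), mul_nonneg (mul_nonneg hρ hs0) (sq_nonneg ((n : ℝ) - 1))]

/-- Frobenius-norm bound for the Nyström residual: under the hypotheses of the trace bound,
with `K_Z` unit-diagonal, off-diagonal entries bounded by `ρ`, and `λ_max(K_Z) ≥ 1`,
`‖K_X - K_XZ K_Z⁻¹ K_ZX‖_F ≤ (N - M)(1 - ρ²/(1 + M(M-1)ρ))`. -/
theorem frobenius_nystrom_residual_bound {M L : ℕ}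
    (ρ : ℝ) (hρ0 : 0 < ρ) (hρ1 : ρ < 1)
    (KZ : Matrix (Fin M) (Fin M) ℝ) (KZX : Matrix (Fin M) (Fin L) ℝ)
    (KX : Matrix (Fin L) (Fin L) ℝ)
    (hK : (Matrix.fromBlocks KZ KZX KZXᵀ KX).PosSemidef)
    (hdiagZ : ∀ i, KZ i i = 1) (hdiagX : ∀ i, KX i i = 1)
    (hKZ : KZ.PosDef)
    (hoff : ∀ i j, i ≠ j → |KZ i j| ≤ ρ)
    (hlmax : ∃ i, 1 ≤ hKZ.1.eigenvalues i)
    (hclose : ∀ i : Fin L, ∃ j : Fin M, ρ ≤ |KZX j i|) :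
    Real.sqrt (∑ i, ∑ j, ((KX - KZXᵀ * KZ⁻¹ * KZX) i j) ^ 2) ≤
      (L : ℝ) * (1 - ρ ^ 2 / (1 + M * (M - 1) * ρ)) := by
  have hMM : (0 : ℝ) ≤ (M : ℝ) * ((M : ℝ) - 1) := by
    rcases Nat.eq_zero_or_pos M with h | h
    · simp [h]
    · have h1 : (1 : ℝ) ≤ (M : ℝ) := by exact_mod_cast h
      nlinarith
  set c : ℝ := 1 + M * (M - 1) * ρ with hc
  have hcpos : (0 : ℝ) < c := by
    have : (0 : ℝ) ≤ M * (M - 1) * ρ := mul_nonneg hMM hρ0.le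
    linarith
  haveI : Invertible KZ := KZ.invertibleOfIsUnitDet (isUnit_iff_ne_zero.mpr hKZ.det_pos.ne')
  have hR : (KX - KZXᵀ * KZ⁻¹ * KZX).PosSemidef := by
    have hKH : KZXᴴ = KZXᵀ := conjTranspose_eq_transpose_of_trivial KZX
    have := (Matrix.PosDef.fromBlocks₁₁ KZX KX hKZ).mp (by rwa [hKH])
    rwa [hKH] at this
  set R := KX - KZXᵀ * KZ⁻¹ * KZX with hRdef
  have hent : ∀ i j : Fin L, R i j = Pi.single i 1 ⬝ᵥ R *ᵥ Pi.single j 1 := by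
    intro i j
    simp [mulVec_single, single_dotProduct]
  have hdpos : ∀ i, 0 ≤ R i i := by
    intro i
    have := hR.dotProduct_mulVec_nonneg (Pi.single i 1)
    rwa [star_trivial, ← hent i i] at this
  have hsq : ∀ i j, (R i j) ^ 2 ≤ R i i * R j j := by
    intro i j
    have := psd_cs hR (Pi.single i 1) (Pi.single j 1)
    rwa [← hent i j, ← hent i i, ← hent j j] at this
  -- diagonal bound
  have hdiagle : ∀ i, R i i ≤ 1 - ρ ^ 2 / c := by
    intro i
    set v : Fin M → ℝ := fun j => KZX j i with hv
    have hRii : R i i = 1 - v ⬝ᵥ KZ⁻¹ *ᵥ v := by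
      have key : (KZXᵀ * KZ⁻¹ * KZX) i i = v ⬝ᵥ KZ⁻¹ *ᵥ v := by
        simp only [mul_apply, transpose_apply, dotProduct, mulVec, Finset.sum_mul,
          Finset.mul_sum, hv]
        rw [Finset.sum_comm]
        exact Finset.sum_congr rfl fun j _ => Finset.sum_congr rfl fun k _ => by ring
      rw [hRdef, Matrix.sub_apply, hdiagX i, key]
    set w : Fin M → ℝ := KZ⁻¹ *ᵥ v with hw
    have hKw : KZ *ᵥ w = v := by
      rw [hw, mulVec_mulVec, Matrix.mul_nonsing_inv _ (isUnit_iff_ne_zero.mpr hKZ.det_pos.ne'),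
        one_mulVec]
    set S : ℝ := v ⬝ᵥ v with hS
    have hSrho : ρ ^ 2 ≤ S := by
      obtain ⟨j, hj⟩ := hclose i
      have h1 : ρ ^ 2 ≤ (v j) ^ 2 := by
        rw [← sq_abs (v j)]
        exact pow_le_pow_left₀ hρ0.le hj 2
      have h2 : (v j) ^ 2 ≤ S := by
        rw [hS]
        have : v ⬝ᵥ v = ∑ k, v k ^ 2 := by simp [dotProduct, sq]
        rw [this]
        exact Finset.single_le_sum (fun k _ => sq_nonneg (v k)) (Finset.mem_univ j)
      linarith
    have hS0 : 0 < S := lt_of_lt_of_le (pow_pos hρ0 2) hSrho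
    have hcs := psd_cs hKZ.posSemidef v w
    rw [hKw] at hcs
    have hquad := quad_bound KZ ρ hρ0.le hdiagZ hoff v
    rw [← hS] at hcs hquad
    rw [← hc] at hquad
    have hq : v ⬝ᵥ KZ⁻¹ *ᵥ v = w ⬝ᵥ v := by rw [← hw, dotProduct_comm]
    have hq0 : 0 ≤ w ⬝ᵥ v := by
      have := (hKZ.inv).posSemidef.dotProduct_mulVec_nonneg v
      rw [star_trivial, ← hw, dotProduct_comm] at this
      exact this
    have hwv : S / c ≤ w ⬝ᵥ v := by
      rw [div_le_iff₀ hcpos]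
      nlinarith [hcs, mul_le_mul_of_nonneg_right hquad hq0, hS0]
    have hfin : ρ ^ 2 / c ≤ v ⬝ᵥ KZ⁻¹ *ᵥ v := by
      rw [hq]
      calc ρ ^ 2 / c ≤ S / c := by
            gcongr

        _ ≤ w ⬝ᵥ v := hwv
    rw [hRii]
    linarith
  -- assemble
  have hsum : ∑ i, ∑ j, (R i j) ^ 2 ≤ (∑ i, R i i) ^ 2 := by
    calc ∑ i, ∑ j, (R i j) ^ 2 ≤ ∑ i, ∑ j, R i i * R j j :=
          Finset.sum_le_sum fun i _ => Finset.sum_le_sum fun j _ => hsq i j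
      _ = (∑ i, R i i) * (∑ j, R j j) := (Finset.sum_mul_sum _ _ _ _).symm
      _ = (∑ i, R i i) ^ 2 := by ring
  have hTr0 : 0 ≤ ∑ i, R i i := Finset.sum_nonneg fun i _ => hdpos i
  have hTr : ∑ i, R i i ≤ (L : ℝ) * (1 - ρ ^ 2 / c) := by
    calc ∑ i, R i i ≤ ∑ _i : Fin L, (1 - ρ ^ 2 / c) :=
          Finset.sum_le_sum fun i _ => hdiagle i
      _ = (L : ℝ) * (1 - ρ ^ 2 / c) := by
          rw [Finset.sum_const, Finset.card_univ, Fintype.card_fin, nsmul_eq_mul]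
  calc Real.sqrt (∑ i, ∑ j, (R i j) ^ 2) ≤ Real.sqrt ((∑ i, R i i) ^ 2) :=
        Real.sqrt_le_sqrt hsum
    _ = ∑ i, R i i := by rw [Real.sqrt_sq hTr0]
    _ ≤ (L : ℝ) * (1 - ρ ^ 2 / c) := hTr
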